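/- arXiv:1807.06831 — 2 statements merged into one kernel-verified Lean document; each statement's English description precedes it below -/
import Mathlib

section
/- If 0 < a ≤ 8, then for every x ∈ (0,1) the iterates f_a^n(x) of the symmetric map f_a = f_{a,1/2} converge to the fixed point 1/2 as n → ∞. -/
/-- The map `f_{a,b}(x) = x / (x + (1-x) * exp (a (x - b)))`. -/
noncomputable def chaosMap (a b : ℝ) : ℝ → ℝ :=
  fun x => x / (x + (1 - x) * Real.exp (a * (x - b)))

open Filter Topology

/-- The logistic sigmoid, inverse of the logit conjugation. -/
noncomputable def sig (y : ℝ) : ℝ := Real.exp y / (1 + Real.exp y)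

/-- The symmetric map `chaosMap a (1/2)` conjugated through `sig`. -/
noncomputable def gmap (a : ℝ) (y : ℝ) : ℝ := y - a * (sig y - 1/2)

lemma one_add_exp_pos (y : ℝ) : 0 < 1 + Real.exp y := by positivity

lemma sig_cont : Continuous sig := by
  apply Continuous.div (by continuity) (by continuity)
  intro y; exact ne_of_gt (one_add_exp_pos y)

lemma gmap_cont (a : ℝ) : Continuous (gmap a) := by
  unfold gmap
  exact continuous_id.sub (continuous_const.mul (sig_cont.sub continuous_const))

lemma sig_zero : sig 0 = 1/2 := by simp [sig]; norm_num

lemma gmap_zero (a : ℝ) : gmap a 0 = 0 := by simp [gmap, sig_zero]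

/-- The conjugacy identity: `chaosMap a (1/2) ∘ sig = sig ∘ gmap a`. -/
lemma semiconj (a : ℝ) (y : ℝ) : chaosMap a (1/2) (sig y) = sig (gmap a y) := by
  have hE := Real.exp_pos y
  have h1 : (0:ℝ) < 1 + Real.exp y := by positivity
  unfold chaosMap gmap
  simp only [sig]
  rw [Real.exp_sub]
  set E := Real.exp y with hEdef
  set C := Real.exp (a * (E / (1 + E) - 1/2)) with hCdef
  have hC : 0 < C := Real.exp_pos _
  have hEC : (0:ℝ) < E + C := by positivity
  have hsum : E / (1 + E) + (1 - E / (1 + E)) * C = (E + C) / (1 + E) := by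
    field_simp
    ring
  rw [hsum]
  rw [div_div_div_eq]
  have h1' : (1 + E) ≠ 0 := ne_of_gt h1
  have hC' : C ≠ 0 := ne_of_gt hC
  have hEC' : (E + C) ≠ 0 := ne_of_gt hEC
  field_simp
  ring

lemma aux1 : StrictMonoOn (fun y : ℝ => (y - 1) * Real.exp y + 1) (Set.Ici 0) := by
  apply strictMonoOn_of_deriv_pos (convex_Ici 0)
  · fun_prop
  · intro x hx
    rw [interior_Ici] at hx
    have h : HasDerivAt (fun y : ℝ => (y - 1) * Real.exp y + 1) (x * Real.exp x) x := by
      have := (((hasDerivAt_id x).sub_const 1).mul (Real.hasDerivAt_exp x)).add_const 1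
      exact this.congr_deriv (by simp only [id_eq]; ring)
    rw [h.deriv]
    exact mul_pos hx (Real.exp_pos x)

lemma aux2 {y : ℝ} (hy : 0 < y) : 0 < (y - 1) * Real.exp y + 1 := by
  have := aux1 (Set.self_mem_Ici) (Set.mem_Ici.mpr hy.le) hy
  simpa using this

/-- Key analytic inequality: `2 (e^y - 1) < y (e^y + 1)` for `y > 0`,
i.e. `tanh (y/2) < y/2`. -/
lemma key_exp_ineq {y : ℝ} (hy : 0 < y) :
    2 * (Real.exp y - 1) < y * (Real.exp y + 1) := by
  have h : StrictMonoOn (fun y : ℝ => y * (Real.exp y + 1) - 2 * (Real.exp y - 1)) (Set.Ici 0) := by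
    apply strictMonoOn_of_deriv_pos (convex_Ici 0)
    · fun_prop
    · intro x hx
      rw [interior_Ici] at hx
      have h : HasDerivAt (fun y : ℝ => y * (Real.exp y + 1) - 2 * (Real.exp y - 1))
          ((x - 1) * Real.exp x + 1) x := by
        have := ((hasDerivAt_id x).mul ((Real.hasDerivAt_exp x).add_const 1)).sub
          (((Real.hasDerivAt_exp x).sub_const 1).const_mul 2)
        exact this.congr_deriv (by simp only [id_eq]; ring)
      rw [h.deriv]
      exact aux2 hx
  have := h (Set.self_mem_Ici) (Set.mem_Ici.mpr hy.le) hy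
  simp only [zero_mul, Real.exp_zero] at this
  linarith

lemma sig_neg (y : ℝ) : sig (-y) = 1 - sig y := by
  have h1 : (0:ℝ) < 1 + Real.exp y := by positivity
  have h2 : (0:ℝ) < 1 + Real.exp (-y) := by positivity
  unfold sig
  rw [Real.exp_neg]
  have hE := Real.exp_pos y
  field_simp
  ring

lemma gmap_neg (a y : ℝ) : gmap a (-y) = - gmap a y := by
  unfold gmap
  rw [sig_neg]
  ring

/-- For `0 < a ≤ 8` the conjugated map strictly decreases absolute values. -/
lemma gmap_contracting {a : ℝ} (ha : 0 < a) (ha8 : a ≤ 8) {y : ℝ} (hy : y ≠ 0) :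
    |gmap a y| < |y| := by
  have main : ∀ z : ℝ, 0 < z → |gmap a z| < |z| := by
    intro z hz
    have hE : 1 < Real.exp z := by rw [Real.one_lt_exp_iff]; exact hz
    have h1 : (0:ℝ) < 1 + Real.exp z := by positivity
    have ht : sig z - 1/2 = (Real.exp z - 1) / (2 * (1 + Real.exp z)) := by
      unfold sig; field_simp; ring
    have htpos : 0 < sig z - 1/2 := by
      rw [ht]
      apply div_pos (by linarith) (by positivity)
    have hlt : a * (sig z - 1/2) < 2 * z := by
      have h8 : a * (sig z - 1/2) ≤ 8 * (sig z - 1/2) :=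
        mul_le_mul_of_nonneg_right ha8 htpos.le
      have hk := key_exp_ineq hz
      have : 8 * ((Real.exp z - 1) / (2 * (1 + Real.exp z))) < 2 * z := by
        rw [mul_comm (8:ℝ), div_mul_eq_mul_div, div_lt_iff₀ (by positivity)]
        nlinarith
      rw [ht] at h8 ⊢
      linarith
    rw [abs_of_pos hz, abs_lt]
    constructor
    · unfold gmap; linarith
    · unfold gmap; nlinarith [mul_pos ha htpos]
  rcases hy.lt_or_gt with h | h
  · have := main (-y) (by linarith)
    rw [gmap_neg, abs_neg, abs_neg] at this
    exact this
  · exact main y h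

set_option maxHeartbeats 1000000 in
/-- Iterates of the conjugated map converge to `0`. -/
lemma gmap_iter_tendsto {a : ℝ} (ha : 0 < a) (ha8 : a ≤ 8) (y : ℝ) :
    Tendsto (fun n : ℕ => (gmap a)^[n] y) atTop (𝓝 0) := by
  set u : ℕ → ℝ := fun n => (gmap a)^[n] y with hu
  have hsucc : ∀ n, u (n + 1) = gmap a (u n) := fun n =>
    Function.iterate_succ_apply' (gmap a) n y
  have hle : ∀ z : ℝ, |gmap a z| ≤ |z| := by
    intro z
    by_cases hz : z = 0
    · simp [hz, gmap_zero]
    · exact (gmap_contracting ha ha8 hz).le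
  have hA : Antitone (fun n => |u n|) :=
    antitone_nat_of_succ_le fun n => by rw [hsucc]; exact hle _
  have hbdd : BddBelow (Set.range fun n => |u n|) :=
    ⟨0, by rintro v ⟨n, rfl⟩; exact abs_nonneg _⟩
  set L := ⨅ n, |u n| with hLdef
  have hL : Tendsto (fun n => |u n|) atTop (𝓝 L) := tendsto_atTop_ciInf hA hbdd
  have hmem : ∀ n, u n ∈ Set.Icc (-|u 0|) (|u 0|) := fun n =>
    abs_le.mp (hA (Nat.zero_le n))
  obtain ⟨z, _, φ, hφ, hzt⟩ := (isCompact_Icc).tendsto_subseq hmem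
  have habs1 : Tendsto (fun n => |u (φ n)|) atTop (𝓝 |z|) :=
    (continuous_abs.tendsto z).comp hzt
  have habs1' : Tendsto (fun n => |u (φ n)|) atTop (𝓝 L) :=
    hL.comp hφ.tendsto_atTop
  have hzL : |z| = L := tendsto_nhds_unique habs1 habs1'
  have h2 : Tendsto (fun n => u (φ n + 1)) atTop (𝓝 (gmap a z)) := by
    simp only [hsucc]
    exact ((gmap_cont a).tendsto z).comp hzt
  have habs2 : Tendsto (fun n => |u (φ n + 1)|) atTop (𝓝 |gmap a z|) :=
    (continuous_abs.tendsto _).comp h2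
  have habs2' : Tendsto (fun n => |u (φ n + 1)|) atTop (𝓝 L) :=
    hL.comp ((tendsto_add_atTop_nat 1).comp hφ.tendsto_atTop)
  have hgzL : |gmap a z| = L := tendsto_nhds_unique habs2 habs2'
  have hz0 : z = 0 := by
    by_contra hz
    have := gmap_contracting ha ha8 hz
    rw [hgzL, hzL] at this
    exact lt_irrefl _ this
  have hL0 : L = 0 := by rw [← hzL, hz0, abs_zero]
  rw [hL0] at hL
  exact tendsto_zero_iff_abs_tendsto_zero u |>.mpr hL

/-- If `0 < a ≤ 8`, then for every `x ∈ (0,1)` the iterates of the symmetric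
map `f_a = f_{a,1/2}` at `x` converge to the fixed point `1/2`. -/
theorem stmt_10 (a : ℝ) (ha : 0 < a) (ha8 : a ≤ 8)
    (x : ℝ) (hx : x ∈ Set.Ioo (0 : ℝ) 1) :
    Filter.Tendsto (fun n : ℕ => (chaosMap a (1 / 2))^[n] x)
      Filter.atTop (nhds (1 / 2)) := by
  obtain ⟨hx0, hx1⟩ := hx
  set y := Real.log (x / (1 - x)) with hy
  have hsig : sig y = x := by
    have h1x : 0 < 1 - x := by linarith
    have : Real.exp y = x / (1 - x) := Real.exp_log (by positivity)
    rw [sig, this]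
    field_simp
    ring
  have hsemi : Function.Semiconj sig (gmap a) (chaosMap a (1/2)) :=
    fun z => (semiconj a z).symm
  have hiter : ∀ n : ℕ, (chaosMap a (1/2))^[n] x = sig ((gmap a)^[n] y) := by
    intro n
    rw [← hsig, (hsemi.iterate_right n).eq]
  have := (sig_cont.tendsto 0).comp (gmap_iter_tendsto ha ha8 y)
  rw [sig_zero] at this
  simpa only [hiter, Function.comp_def] using this
end

section
/- For every b ∈ (0,1) with b ≠ 1/2, there exists a_b > 0 such that for every a > a_b the map f_{a,b} has a periodic point of period 3, i.e., a point x ∈ [0,1] with f_{a,b}^3(x) = x and f_{a,b}(x) ≠ x. -/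
open Real Set

lemma den_pos (a b : ℝ) {x : ℝ} (h0 : 0 ≤ x) (h1 : x ≤ 1) :
    0 < x + (1 - x) * Real.exp (a * (x - b)) := by
  rcases eq_or_lt_of_le h0 with h | h
  · rw [← h]; simpa using exp_pos (a * (0 - b))
  · have h2 : 0 ≤ (1 - x) * Real.exp (a * (x - b)) :=
      mul_nonneg (by linarith) (exp_pos _).le
    linarith

lemma map_mem (a b : ℝ) {x : ℝ} (hx : x ∈ Icc (0:ℝ) 1) : chaosMap a b x ∈ Icc (0:ℝ) 1 := by
  have hd := den_pos a b hx.1 hx.2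
  constructor
  · exact div_nonneg hx.1 hd.le
  · show x / _ ≤ 1
    rw [div_le_one hd]
    nlinarith [mul_nonneg (by linarith [hx.2] : (0:ℝ) ≤ 1 - x) (exp_pos (a*(x-b))).le]

lemma inv_mem {s : ℝ} (hs : 0 < s) : 1/(1+s) ∈ Ioo (0:ℝ) 1 := by
  constructor
  · positivity
  · rw [div_lt_one (by linarith)]; linarith

lemma step (a b : ℝ) {x r : ℝ} (hx : x ∈ Ioo (0:ℝ) 1) (hr : (1 - x)/x = r) :
    chaosMap a b x = 1/(1 + r * Real.exp (a * (x - b))) ∧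
    chaosMap a b x ∈ Ioo (0:ℝ) 1 ∧
    (1 - chaosMap a b x)/(chaosMap a b x) = r * Real.exp (a * (x - b)) := by
  have hx0 := hx.1
  have hx1 := hx.2
  have hr0 : 0 < r := hr ▸ div_pos (by linarith) hx0
  have hE := exp_pos (a * (x - b))
  have hs : 0 < r * Real.exp (a * (x - b)) := mul_pos hr0 hE
  have hd := den_pos a b hx0.le hx1.le
  have hform : chaosMap a b x = 1/(1 + r * Real.exp (a * (x - b))) := by
    unfold chaosMap
    rw [div_eq_div_iff hd.ne' (by positivity : (0:ℝ) < 1 + r * Real.exp (a*(x-b))).ne']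
    have : r * x = 1 - x := by rw [← hr]; field_simp
    nlinarith [this]
  refine ⟨hform, hform ▸ inv_mem hs, ?_⟩
  rw [hform]
  field_simp
  ring

lemma conj (a c : ℝ) {y : ℝ} (hy : y ∈ Icc (0:ℝ) 1) :
    chaosMap a (1 - c) (1 - y) = 1 - chaosMap a c y := by
  have h1 := den_pos a c hy.1 hy.2
  have h2 := den_pos a (1-c) (by linarith [hy.2] : (0:ℝ) ≤ 1 - y) (by linarith [hy.1])
  have hE : Real.exp (a * (1 - y - (1 - c))) = (Real.exp (a * (y - c)))⁻¹ := by
    rw [← Real.exp_neg]; ring_nf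
  unfold chaosMap
  rw [eq_sub_iff_add_eq, div_add_div _ _ h2.ne' h1.ne', div_eq_one_iff_eq (by positivity)]
  rw [hE]
  have hEpos := exp_pos (a * (y - c))
  field_simp
  ring

lemma cont (a b : ℝ) : ContinuousOn (chaosMap a b) (Icc (0:ℝ) 1) := by
  apply ContinuousOn.div continuousOn_id (by fun_prop)
  exact fun x hx => (den_pos a b hx.1 hx.2).ne'

lemma iter3_eq (f : ℝ → ℝ) (x : ℝ) : f^[3] x = f (f (f x)) := by
  simp [Function.iterate_succ_apply']

lemma cont3 (a b : ℝ) : ContinuousOn ((chaosMap a b)^[3]) (Icc (0:ℝ) 1) := by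
  have h1 : ContinuousOn (fun x => chaosMap a b (chaosMap a b (chaosMap a b x))) (Icc (0:ℝ) 1) := by
    apply (cont a b).comp (((cont a b).comp (cont a b) (fun x hx => map_mem a b hx)).mono (subset_refl _))
    exact fun x hx => map_mem a b (map_mem a b hx)
  exact h1.congr (fun x _ => iter3_eq _ x)

lemma fix_eq (a b : ℝ) (ha : a ≠ 0) {x : ℝ} (hx0 : 0 < x) (hx1 : x < 1)
    (h : chaosMap a b x = x) : x = b := by
  have hd := den_pos a b hx0.le hx1.le
  unfold chaosMap at h
  rw [div_eq_iff hd.ne'] at h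
  have hE : Real.exp (a * (x - b)) = 1 := by
    have h3 : (1 - x) * (Real.exp (a * (x - b)) - 1) = 0 := by nlinarith
    rcases mul_eq_zero.1 h3 with h4 | h4
    · exfalso; linarith
    · linarith
  have h6 := (Real.exp_eq_one_iff _).1 hE
  rcases mul_eq_zero.1 h6 with h5 | h5
  · exact absurd h5 ha
  · linarith

lemma sq_le_four_exp {t : ℝ} (ht : 0 ≤ t) : t^2 ≤ 4 * Real.exp t := by
  have h := Real.add_one_le_exp (t/2)
  have h2 : Real.exp t = Real.exp (t/2) * Real.exp (t/2) := by
    rw [← Real.exp_add]; ring_nf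
  nlinarith [Real.exp_pos (t/2)]

lemma decay {ε a : ℝ} (hε : 0 < ε) (ha : 0 < a) :
    a * Real.exp (-(a*ε)) ≤ 4/(a*ε^2) := by
  have h := sq_le_four_exp (mul_nonneg ha.le hε.le)
  have hpos := Real.exp_pos (a*ε)
  have hinv : Real.exp (-(a*ε)) = (Real.exp (a*ε))⁻¹ := Real.exp_neg _
  rw [le_div_iff₀ (by positivity), hinv]
  have key : (a*ε)^2 * (Real.exp (a*ε))⁻¹ ≤ 4 := by
    rw [inv_eq_one_div, mul_one_div, div_le_iff₀ hpos]; linarith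
  calc a * (Real.exp (a*ε))⁻¹ * (a*ε^2) = (a*ε)^2 * (Real.exp (a*ε))⁻¹ := by ring
    _ ≤ 4 := key

lemma decay2 {ε a : ℝ} (hε : 0 < ε) (ha : 0 < a) :
    Real.exp (-(a*ε)) ≤ 4/(a^2*ε^2) := by
  have h := sq_le_four_exp (mul_nonneg ha.le hε.le)
  have hpos := Real.exp_pos (a*ε)
  have hinv : Real.exp (-(a*ε)) = (Real.exp (a*ε))⁻¹ := Real.exp_neg _
  rw [le_div_iff₀ (by positivity), hinv]
  have key : (a*ε)^2 * (Real.exp (a*ε))⁻¹ ≤ 4 := by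
    rw [inv_eq_one_div, mul_one_div, div_le_iff₀ hpos]; linarith
  calc (Real.exp (a*ε))⁻¹ * (a^2*ε^2) = (a*ε)^2 * (Real.exp (a*ε))⁻¹ := by ring
    _ ≤ 4 := key

lemma one_sub_le_inv {s : ℝ} (hs : 0 < s) : 1 - s ≤ 1/(1+s) := by
  rw [le_div_iff₀ (by linarith)]; nlinarith
set_option maxHeartbeats 1000000 in
lemma core {b : ℝ} (hb0 : 0 < b) (hb : b < 1/2) :
    ∃ a_b : ℝ, 0 < a_b ∧ ∀ a : ℝ, a_b < a →
      ∃ x ∈ Set.Icc (0 : ℝ) 1, (chaosMap a b)^[3] x = x ∧ chaosMap a b x ≠ x := by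
  set ε := min b (1 - 2*b) / 2 with hεdef
  have hεb : ε ≤ b/2 := by
    have := min_le_left b (1-2*b); rw [hεdef]; linarith
  have hεc : ε ≤ (1-2*b)/2 := by
    have := min_le_right b (1-2*b); rw [hεdef]; linarith
  have hε0 : 0 < ε := by
    rw [hεdef]
    rcases le_total b (1-2*b) with h|h
    · rw [min_eq_left h]; linarith
    · rw [min_eq_right h]; linarith
  set q := 2*b + ε with hqdef
  set p := 2*b - ε with hpdef
  have hp0 : 0 < p := by rw [hpdef]; linarith
  have hpb : b < p := by rw [hpdef]; linarith
  have hq1 : q < 1 := by rw [hqdef]; linarith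
  have hpq : p < q := by rw [hpdef, hqdef]; linarith
  have hq0 : 0 < q := by linarith
  have hp1 : p < 1 := by linarith
  have hqb : ε ≤ q - b := by rw [hqdef]; linarith
  have hpbε : ε ≤ p - b := by rw [hpdef]; linarith
  have hq1ε : ε ≤ 1 - q := by rw [hqdef]; linarith
  have hbε : b + ε ≤ 1/2 := by linarith
  have h2εb : 2*ε ≤ b := by linarith
  set rq := (1-q)/q with hrqdef
  set rp := (1-p)/p with hrpdef
  have hrq : 0 < rq := div_pos (by linarith) hq0
  have hrp : 0 < rp := div_pos (by linarith) hp0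
  have hrpp : p * rp = 1 - p := by rw [hrpdef]; field_simp
  clear_value rq rp
  clear_value q p
  clear_value ε
  have he1 := Real.exp_pos 1
  have hε2 : (0:ℝ) < ε^2 := pow_pos hε0 2
  have hε3 : (0:ℝ) < ε^3 := pow_pos hε0 3
  have t1 : (0:ℝ) < 8/(rq*ε^2) := div_pos (by norm_num) (mul_pos hrq hε2)
  have t2 : (0:ℝ) < 4/(rp*ε^2) := div_pos (by norm_num) (mul_pos hrp hε2)
  have t3 : (0:ℝ) < 4*Real.exp 1*rp/ε^2 := div_pos (mul_pos (mul_pos (by norm_num) he1) hrp) hε2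
  have t4 : (0:ℝ) < 4*Real.exp 1*rq/ε^3 := div_pos (mul_pos (mul_pos (by norm_num) he1) hrq) hε3
  have t5 : (0:ℝ) < 2/(1-p) := div_pos two_pos (by linarith)
  refine ⟨1 + 8/(rq*ε^2) + 4/(rp*ε^2) + 4*Real.exp 1*rp/ε^2 + 4*Real.exp 1*rq/ε^3
      + 2/(1-p), by linarith, ?_⟩
  intro a ha
  have ha1 : 1 < a := by linarith
  have ha0 : 0 < a := by linarith
  have hdec : a * Real.exp (-(a*ε)) ≤ 4/(a*ε^2) := decay hε0 ha0
  have hdec2 : Real.exp (-(a*ε)) ≤ 4/(a^2*ε^2) := decay2 hε0 ha0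
  have hEneg := Real.exp_pos (-(a*ε))
  have haε2 : (0:ℝ) < a*ε^2 := mul_pos ha0 hε2
  -- conditions
  have hC1 : 2*(a*Real.exp (-(a*ε))) ≤ rq := by
    have h8 : 8/(rq*ε^2) < a := by linarith
    rw [div_lt_iff₀ (mul_pos hrq hε2)] at h8
    have : 4/(a*ε^2) ≤ rq/2 := by
      rw [div_le_div_iff₀ haε2 (by norm_num)]
      nlinarith
    linarith
  have hC3 : a*Real.exp (-(a*ε)) ≤ rp := by
    have h8 : 4/(rp*ε^2) < a := by linarith
    rw [div_lt_iff₀ (mul_pos hrp hε2)] at h8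
    have : 4/(a*ε^2) ≤ rp := by
      rw [div_le_iff₀ haε2]
      nlinarith
    linarith
  have hC4 : Real.exp 1 * rp * (a*Real.exp (-(a*ε))) ≤ 1 := by
    have h8 : 4*Real.exp 1*rp/ε^2 < a := by linarith
    rw [div_lt_iff₀ hε2] at h8
    have h9 : Real.exp 1 * rp * (4/(a*ε^2)) ≤ 1 := by
      rw [mul_div_assoc', div_le_one haε2]
      nlinarith
    nlinarith [mul_le_mul_of_nonneg_left hdec (mul_nonneg he1.le hrp.le)]
  have hC2 : rq * Real.exp 1 * Real.exp (-(a*ε)) < ε := by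
    have h8 : 4*Real.exp 1*rq/ε^3 < a := by linarith
    rw [div_lt_iff₀ hε3] at h8
    have hd3 : Real.exp (-(a*ε)) ≤ 4/(a*ε^2) := by
      have h12 : a*ε^2 ≤ a^2*ε^2 := by
        nlinarith [mul_le_mul_of_nonneg_right (by nlinarith : a ≤ a^2) hε2.le]
      have : 4/(a^2*ε^2) ≤ 4/(a*ε^2) :=
        div_le_div_of_nonneg_left (by norm_num) haε2 h12
      linarith
    have h9 : rq * Real.exp 1 * (4/(a*ε^2)) < ε := by
      rw [mul_div_assoc', div_lt_iff₀ haε2]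
      nlinarith
    nlinarith [mul_le_mul_of_nonneg_left hd3 (mul_nonneg hrq.le he1.le)]
  have hC5 : 1/(1-p) < Real.exp (a/2 - 1) := by
    have h8 : 2/(1-p) < a := by linarith
    have hx := Real.add_one_le_exp (a/2 - 1)
    have h9 : 1/(1-p) < a/2 := by
      rw [div_lt_iff₀ (by linarith)]
      rw [div_lt_iff₀ (by linarith)] at h8
      nlinarith
    linarith
  -- the q-chain
  have hqI : q ∈ Set.Ioo (0:ℝ) 1 := ⟨hq0, hq1⟩
  obtain ⟨hf1, hx1I, hr1⟩ := step a b hqI hrqdef.symm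
  obtain ⟨hf2, hx2I, hr2⟩ := step a b hx1I hr1
  obtain ⟨hf3, hx3I, hr3⟩ := step a b hx2I hr2
  set x1 := chaosMap a b q with hx1def
  set x2 := chaosMap a b x1 with hx2def
  set x3 := chaosMap a b x2 with hx3def
  clear_value x3
  clear_value x2
  clear_value x1
  have hqchain : q < (chaosMap a b)^[3] q := by
    rw [iter3_eq]
    rw [← hx1def, ← hx2def, ← hx3def]
    have hs1 : (0:ℝ) < rq * Real.exp (a*(q-b)) := mul_pos hrq (Real.exp_pos _)
    have hx1ub : x1 ≤ Real.exp (-(a*ε))/rq := by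
      have h1 : x1 ≤ 1/(rq * Real.exp (a*(q-b))) := by
        rw [hf1]
        exact one_div_le_one_div_of_le hs1 (by linarith only [hs1])
      have h2 : 1/(rq * Real.exp (a*(q-b))) = Real.exp (-(a*(q-b)))/rq := by
        rw [Real.exp_neg]; field_simp
      have h6 : a*ε ≤ a*(q-b) := mul_le_mul_of_nonneg_left hqb ha0.le
      have h3 : Real.exp (-(a*(q-b))) ≤ Real.exp (-(a*ε)) :=
        Real.exp_le_exp.2 (by linarith only [h6])
      calc x1 ≤ Real.exp (-(a*(q-b)))/rq := by rw [← h2]; exact h1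
        _ ≤ Real.exp (-(a*ε))/rq := (div_le_div_iff_of_pos_right hrq).2 h3
    have hs2eq : rq * Real.exp (a*(q-b)) * Real.exp (a*(x1-b)) = rq * Real.exp (a*(ε+x1)) := by
      rw [mul_assoc, ← Real.exp_add]
      congr 2
      rw [hqdef]; ring
    have hs2 : (0:ℝ) < rq * Real.exp (a*(ε+x1)) := mul_pos hrq (Real.exp_pos _)
    have hx2ub : x2 ≤ Real.exp (-(a*ε))/rq := by
      have h1 : x2 ≤ 1/(rq * Real.exp (a*(ε+x1))) := by
        rw [hf2, hs2eq]
        exact one_div_le_one_div_of_le hs2 (by linarith only [hs2])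
      have h6 : a*ε ≤ a*(ε+x1) :=
        mul_le_mul_of_nonneg_left (le_add_of_nonneg_right hx1I.1.le) ha0.le
      have h3 : Real.exp (a*ε) ≤ Real.exp (a*(ε+x1)) := Real.exp_le_exp.2 h6
      have h4 : 1/(rq * Real.exp (a*(ε+x1))) ≤ 1/(rq * Real.exp (a*ε)) :=
        one_div_le_one_div_of_le (mul_pos hrq (Real.exp_pos _))
          (mul_le_mul_of_nonneg_left h3 hrq.le)
      have h2 : 1/(rq * Real.exp (a*ε)) = Real.exp (-(a*ε))/rq := by
        rw [Real.exp_neg]; field_simp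
      linarith only [h1, h4, h2.ge, h2.le]
    have hs3eq : rq * Real.exp (a*(q-b)) * Real.exp (a*(x1-b)) * Real.exp (a*(x2-b))
        = rq * Real.exp (a*(ε-b) + a*(x1+x2)) := by
      rw [mul_assoc, mul_assoc, ← Real.exp_add, ← Real.exp_add]
      congr 2
      rw [hqdef]; ring
    have hxx : a*(x1+x2) ≤ 1 := by
      have h5 : x1 + x2 ≤ 2*(Real.exp (-(a*ε))/rq) := by
        linarith only [hx1ub, hx2ub]
      have h1 : a*(x1+x2) ≤ a*(2*(Real.exp (-(a*ε))/rq)) :=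
        mul_le_mul_of_nonneg_left h5 ha0.le
      have h2 : a*(2*(Real.exp (-(a*ε))/rq)) = 2*(a*Real.exp (-(a*ε)))/rq := by ring
      have h3 : 2*(a*Real.exp (-(a*ε)))/rq ≤ 1 := by
        rw [div_le_one hrq]; exact hC1
      linarith only [h1, h2.le, h2.ge, h3]
    have hexp_le : a*(ε-b) + a*(x1+x2) ≤ 1 + -(a*ε) := by
      have h6 : a*(ε-b) ≤ a*(-ε) := mul_le_mul_of_nonneg_left (by linarith only [h2εb]) ha0.le
      have h7 : a*(-ε) = -(a*ε) := by ring
      linarith only [h6, h7.le, h7.ge, hxx]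
    have hs3ub : rq * Real.exp (a*(ε-b) + a*(x1+x2)) < ε := by
      have h1 : Real.exp (a*(ε-b) + a*(x1+x2)) ≤ Real.exp 1 * Real.exp (-(a*ε)) := by
        rw [← Real.exp_add]
        exact Real.exp_le_exp.2 hexp_le
      have h2 : rq * Real.exp (a*(ε-b) + a*(x1+x2)) ≤ rq * (Real.exp 1 * Real.exp (-(a*ε))) :=
        mul_le_mul_of_nonneg_left h1 hrq.le
      have h3 : rq * (Real.exp 1 * Real.exp (-(a*ε))) = rq * Real.exp 1 * Real.exp (-(a*ε)) := by
        ring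
      linarith only [h2, h3.le, h3.ge, hC2]
    have hs3pos : (0:ℝ) < rq * Real.exp (a*(ε-b) + a*(x1+x2)) := mul_pos hrq (Real.exp_pos _)
    have hx3lb : 1 - rq * Real.exp (a*(ε-b) + a*(x1+x2)) ≤ x3 := by
      rw [hf3, hs3eq]
      exact one_sub_le_inv hs3pos
    linarith only [hx3lb, hs3ub, hq1ε]
  -- the p-chain
  have hpI : p ∈ Set.Ioo (0:ℝ) 1 := ⟨hp0, hp1⟩
  obtain ⟨hg1, hy1I, hq1'⟩ := step a b hpI hrpdef.symm
  obtain ⟨hg2, hy2I, hq2'⟩ := step a b hy1I hq1'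
  obtain ⟨hg3, hy3I, hq3'⟩ := step a b hy2I hq2'
  set y1 := chaosMap a b p with hy1def
  set y2 := chaosMap a b y1 with hy2def
  set y3 := chaosMap a b y2 with hy3def
  clear_value y3
  clear_value y2
  clear_value y1
  have hpchain : (chaosMap a b)^[3] p < p := by
    rw [iter3_eq, ← hy1def, ← hy2def, ← hy3def]
    have hs1 : (0:ℝ) < rp * Real.exp (a*(p-b)) := mul_pos hrp (Real.exp_pos _)
    have hy1ub : y1 ≤ Real.exp (-(a*ε))/rp := by
      have h1 : y1 ≤ 1/(rp * Real.exp (a*(p-b))) := by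
        rw [hg1]
        exact one_div_le_one_div_of_le hs1 (by linarith only [hs1])
      have h2 : 1/(rp * Real.exp (a*(p-b))) = Real.exp (-(a*(p-b)))/rp := by
        rw [Real.exp_neg]; field_simp
      have h6 : a*ε ≤ a*(p-b) := mul_le_mul_of_nonneg_left hpbε ha0.le
      have h3 : Real.exp (-(a*(p-b))) ≤ Real.exp (-(a*ε)) :=
        Real.exp_le_exp.2 (by linarith only [h6])
      calc y1 ≤ Real.exp (-(a*(p-b)))/rp := by rw [← h2]; exact h1
        _ ≤ Real.exp (-(a*ε))/rp := (div_le_div_iff_of_pos_right hrp).2 h3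
    have hs2eq : rp * Real.exp (a*(p-b)) * Real.exp (a*(y1-b)) = rp * Real.exp (a*(y1-ε)) := by
      rw [mul_assoc, ← Real.exp_add]
      congr 2
      rw [hpdef]; ring
    have hay1 : a*y1 ≤ 1 := by
      have h1 : a*y1 ≤ a*(Real.exp (-(a*ε))/rp) := mul_le_mul_of_nonneg_left hy1ub ha0.le
      have h2 : a*(Real.exp (-(a*ε))/rp) = (a*Real.exp (-(a*ε)))/rp := by ring
      have h3 : (a*Real.exp (-(a*ε)))/rp ≤ 1 := by
        rw [div_le_one hrp]; exact hC3
      linarith only [h1, h2.le, h2.ge, h3]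
    have hs2ub : rp * Real.exp (a*(y1-ε)) ≤ rp * Real.exp 1 * Real.exp (-(a*ε)) := by
      have h1 : Real.exp (a*(y1-ε)) ≤ Real.exp 1 * Real.exp (-(a*ε)) := by
        rw [← Real.exp_add]
        apply Real.exp_le_exp.2
        have h6 : a*(y1-ε) = a*y1 - a*ε := by ring
        linarith only [hay1, h6.le, h6.ge]
      have h2 : rp * Real.exp (a*(y1-ε)) ≤ rp * (Real.exp 1 * Real.exp (-(a*ε))) :=
        mul_le_mul_of_nonneg_left h1 hrp.le
      have h3 : rp * (Real.exp 1 * Real.exp (-(a*ε))) = rp * Real.exp 1 * Real.exp (-(a*ε)) := by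
        ring
      linarith only [h2, h3.le, h3.ge]
    have hs2lb : rp * Real.exp (-(a*ε)) ≤ rp * Real.exp (a*(y1-ε)) := by
      apply mul_le_mul_of_nonneg_left _ hrp.le
      apply Real.exp_le_exp.2
      have h6 : a*(y1-ε) = a*y1 - a*ε := by ring
      have h7 : 0 ≤ a*y1 := mul_nonneg ha0.le hy1I.1.le
      linarith only [h6.ge, h7]
    have hs2pos : (0:ℝ) < rp * Real.exp (a*(y1-ε)) := mul_pos hrp (Real.exp_pos _)
    have hy2lb : 1 - rp * Real.exp 1 * Real.exp (-(a*ε)) ≤ y2 := by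
      have h1 := one_sub_le_inv hs2pos
      rw [hg2, hs2eq]
      linarith only [h1, hs2ub]
    have hs3lb : rp * Real.exp (a/2 - 1)
        ≤ rp * Real.exp (a*(y1-ε)) * Real.exp (a*(y2-b)) := by
      have h1 : rp * Real.exp (-(a*ε)) * Real.exp (a*(y2-b))
          ≤ rp * Real.exp (a*(y1-ε)) * Real.exp (a*(y2-b)) :=
        mul_le_mul_of_nonneg_right hs2lb (Real.exp_pos _).le
      have h2 : rp * Real.exp (-(a*ε)) * Real.exp (a*(y2-b))
          = rp * Real.exp (-(a*ε) + a*(y2-b)) := by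
        rw [mul_assoc, ← Real.exp_add]
      have h3 : a/2 - 1 ≤ -(a*ε) + a*(y2-b) := by
        have h4 : a*(1 - rp * Real.exp 1 * Real.exp (-(a*ε)) - b) ≤ a*(y2-b) :=
          mul_le_mul_of_nonneg_left (by linarith only [hy2lb]) ha0.le
        have h5 : a*(rp * Real.exp 1 * Real.exp (-(a*ε)))
            = Real.exp 1 * rp * (a*Real.exp (-(a*ε))) := by ring
        have h5' : a*(rp * Real.exp 1 * Real.exp (-(a*ε))) ≤ 1 := by
          linarith only [h5.le, hC4]
        have h7 : a*(1 - rp * Real.exp 1 * Real.exp (-(a*ε)) - b)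
            = a*(1-b) - a*(rp * Real.exp 1 * Real.exp (-(a*ε))) := by ring
        have h8 : a*(1/2) ≤ a*(1-b-ε) := mul_le_mul_of_nonneg_left (by linarith only [hbε]) ha0.le
        have h9 : -(a*ε) + a*(y2-b) = a*(y2-b) - a*ε := by ring
        have h10 : a*(1-b) - a*ε = a*(1-b-ε) := by ring
        have h11 : a*(1/2) = a/2 := by ring
        linarith only [h4, h5', h7.le, h7.ge, h8, h9.le, h9.ge, h10.le, h10.ge, h11.le, h11.ge]
      have h6 : rp * Real.exp (a/2 - 1) ≤ rp * Real.exp (-(a*ε) + a*(y2-b)) :=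
        mul_le_mul_of_nonneg_left (Real.exp_le_exp.2 h3) hrp.le
      linarith only [h1, h2.le, h2.ge, h6]
    have hs3pos : (0:ℝ) < rp * Real.exp (a*(p-b)) * Real.exp (a*(y1-b)) * Real.exp (a*(y2-b)) :=
      mul_pos (mul_pos (mul_pos hrp (Real.exp_pos _)) (Real.exp_pos _)) (Real.exp_pos _)
    have hy3ub : y3 ≤ 1/(rp * Real.exp (a/2 - 1)) := by
      have h1 : y3 ≤ 1/(rp * Real.exp (a*(p-b)) * Real.exp (a*(y1-b)) * Real.exp (a*(y2-b))) := by
        rw [hg3]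
        exact one_div_le_one_div_of_le hs3pos (by linarith only [hs3pos])
      have h2 : 1/(rp * Real.exp (a*(p-b)) * Real.exp (a*(y1-b)) * Real.exp (a*(y2-b)))
          ≤ 1/(rp * Real.exp (a/2 - 1)) := by
        apply one_div_le_one_div_of_le (mul_pos hrp (Real.exp_pos _))
        calc rp * Real.exp (a/2 - 1) ≤ rp * Real.exp (a*(y1-ε)) * Real.exp (a*(y2-b)) := hs3lb
          _ = rp * Real.exp (a*(p-b)) * Real.exp (a*(y1-b)) * Real.exp (a*(y2-b)) := by
              rw [hs2eq]
      linarith only [h1, h2]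
    have hfin : 1/(rp * Real.exp (a/2 - 1)) < p := by
      rw [div_lt_iff₀ (mul_pos hrp (Real.exp_pos _))]
      have h1 : 1 < (1-p) * Real.exp (a/2 - 1) := by
        rw [div_lt_iff₀ (by linarith only [hp1] : (0:ℝ) < 1 - p)] at hC5
        linarith only [hC5]
      have h2 : p * (rp * Real.exp (a/2 - 1)) = (p*rp) * Real.exp (a/2 - 1) := by ring
      have h3 : (p*rp) * Real.exp (a/2 - 1) = (1-p) * Real.exp (a/2 - 1) := by rw [hrpp]
      linarith only [h1, h2.le, h2.ge, h3.le, h3.ge]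
    linarith only [hy3ub, hfin]
  -- IVT
  have hsub : Set.Icc p q ⊆ Set.Icc (0:ℝ) 1 := Set.Icc_subset_Icc hp0.le hq1.le
  have hg : ContinuousOn (fun x => (chaosMap a b)^[3] x - x) (Set.Icc p q) :=
    ((cont3 a b).mono hsub).sub continuousOn_id
  have h0mem : (0:ℝ) ∈ Set.Icc ((chaosMap a b)^[3] p - p) ((chaosMap a b)^[3] q - q) :=
    ⟨by linarith only [hpchain], by linarith only [hqchain]⟩
  obtain ⟨x, hxm, hgx⟩ := intermediate_value_Icc hpq.le hg h0mem
  have hgx' : (chaosMap a b)^[3] x - x = 0 := hgx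
  refine ⟨x, hsub hxm, sub_eq_zero.1 hgx', ?_⟩
  intro hfx
  have hx0 : 0 < x := lt_of_lt_of_le hp0 hxm.1
  have hx1 : x < 1 := lt_of_le_of_lt hxm.2 hq1
  have hxb := fix_eq a b ha0.ne' hx0 hx1 hfx
  have := hxm.1
  linarith only [hxb.le, hxb.ge, hpb, this]

lemma conj' (a b : ℝ) {y : ℝ} (hy : y ∈ Icc (0:ℝ) 1) :
    chaosMap a b (1 - y) = 1 - chaosMap a (1-b) y := by
  have h := conj a (1-b) hy
  rwa [sub_sub_cancel] at h

lemma conj_iter3 (a b : ℝ) {y : ℝ} (hy : y ∈ Icc (0:ℝ) 1) :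
    (chaosMap a b)^[3] (1 - y) = 1 - (chaosMap a (1-b))^[3] y := by
  have m1 : chaosMap a (1-b) y ∈ Icc (0:ℝ) 1 := map_mem _ _ hy
  have m2 : chaosMap a (1-b) (chaosMap a (1-b) y) ∈ Icc (0:ℝ) 1 := map_mem _ _ m1
  rw [iter3_eq, iter3_eq, conj' a b hy, conj' a b m1]
  have h12 : (1:ℝ) - (1 - chaosMap a (1-b) (chaosMap a (1-b) y))
      = chaosMap a (1-b) (chaosMap a (1-b) y) := by ring
  rw [conj' a b m2]

/-- For every `b ∈ (0,1)` with `b ≠ 1/2` there is `a_b > 0` such that for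
every `a > a_b` the map `f_{a,b}` has a periodic point of period 3. -/
theorem stmt_12 (b : ℝ) (hb : b ∈ Set.Ioo (0 : ℝ) 1) (hb2 : b ≠ 1 / 2) :
    ∃ a_b : ℝ, 0 < a_b ∧ ∀ a : ℝ, a_b < a →
      ∃ x ∈ Set.Icc (0 : ℝ) 1, (chaosMap a b)^[3] x = x ∧ chaosMap a b x ≠ x := by
  rcases lt_or_gt_of_ne hb2 with h | h
  · exact core hb.1 h
  · obtain ⟨a_b, hab, H⟩ := core (b := 1 - b) (by linarith [hb.2]) (by linarith)
    refine ⟨a_b, hab, ?_⟩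
    intro a ha
    obtain ⟨x', hx'I, hper, hne⟩ := H a ha
    refine ⟨1 - x', ⟨by linarith [hx'I.2], by linarith [hx'I.1]⟩, ?_, ?_⟩
    · rw [conj_iter3 a b hx'I, hper]
    · intro hfix
      apply hne
      rw [conj' a b hx'I] at hfix
      linarith [hfix]
end
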